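/- Every finite directed graph G (possibly containing directed cycles) admits at least one acyclification: there exists an acyclic directed graph G' on the same vertex set satisfying the two defining conditions of an acyclification of G. -/

import Mathlib

/-!
Directed (possibly cyclic) graphs on a vertex type `V` are given by their
edge relation `E : V → V → Prop`.
-/

/-- `Anc E i j` : `i` is an ancestor of `j` in the graph with edge relation `E`,
i.e. there is a directed path (possibly of length 0) from `i` to `j`. -/
def Anc {V : Type*} (E : V → V → Prop) (i j : V) : Prop :=
  Relation.ReflTransGen E i j

/-- `InSC E i j` : `i` belongs to the strongly connected component of `j`,
i.e. `i ∈ AN_G(j) ∩ DE_G(j)`. -/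
def InSC {V : Type*} (E : V → V → Prop) (i j : V) : Prop :=
  Anc E i j ∧ Anc E j i

/-- A directed graph is acyclic if it contains no directed cycle. -/
def Acyclic {V : Type*} (E : V → V → Prop) : Prop :=
  ∀ i, ¬ Relation.TransGen E i i

/-- `G' = (V, E')` is an acyclification of `G = (V, E)`:
`G'` is acyclic; for `i ∉ SC_G(j)`, `i → j ∈ E'` iff some `k ∈ SC_G(j)` has `i → k ∈ E`;
and for distinct `i ∈ SC_G(j)`, `i → j ∈ E'` or `j → i ∈ E'`. -/
def IsAcyclification {V : Type*} (E E' : V → V → Prop) : Prop :=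
  Acyclic E' ∧
  (∀ i j, ¬ InSC E i j → (E' i j ↔ ∃ k, InSC E k j ∧ E i k)) ∧
  (∀ i j, i ≠ j → InSC E i j → (E' i j ∨ E' j i))

/-- A walk in the graph with edge relation `E`: a sequence of `len + 1` vertices
`v 0, …, v len` together with edge directions `d 0, …, d (len - 1)`;
if `d k = true` the `k`-th edge is `v k → v (k+1) ∈ E`, otherwise it is
`v (k+1) → v k ∈ E`.  Vertices and edges may repeat. -/
structure Walk {V : Type*} (E : V → V → Prop) where
  len : ℕ
  v : ℕ → V
  d : ℕ → Bool
  valid : ∀ k, k < len →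
    (d k = true → E (v k) (v (k + 1))) ∧ (d k = false → E (v (k + 1)) (v k))

/-- The interior node at position `k` (with `0 < k < w.len`) is a collider on the
walk: both adjacent edges point into it. -/
def IsCollider {V : Type*} {E : V → V → Prop} (w : Walk E) (k : ℕ) : Prop :=
  w.d (k - 1) = true ∧ w.d k = false

/-- `x` is an ancestor of the set `C`. -/
def AncOfSet {V : Type*} (E : V → V → Prop) (C : Set V) (x : V) : Prop :=
  ∃ c ∈ C, Anc E x c

/-- The walk `w` is d-blocked by the set `C`. -/
def DBlocked {V : Type*} (E : V → V → Prop) (C : Set V) (w : Walk E) : Prop :=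
  w.v 0 ∈ C ∨ w.v w.len ∈ C ∨
  ∃ k, 0 < k ∧ k < w.len ∧
    ((IsCollider w k ∧ ¬ AncOfSet E C (w.v k)) ∨
     (¬ IsCollider w k ∧ w.v k ∈ C))

/-- The walk `w` is σ-blocked by the set `C`. -/
def SigmaBlocked {V : Type*} (E : V → V → Prop) (C : Set V) (w : Walk E) : Prop :=
  w.v 0 ∈ C ∨ w.v w.len ∈ C ∨
  ∃ k, 0 < k ∧ k < w.len ∧
    ((IsCollider w k ∧ ¬ AncOfSet E C (w.v k)) ∨
     (w.v k ∈ C ∧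
       ((w.d (k - 1) = true ∧ w.d k = true ∧ ¬ InSC E (w.v (k + 1)) (w.v k)) ∨
        (w.d (k - 1) = false ∧ w.d k = false ∧ ¬ InSC E (w.v (k - 1)) (w.v k)) ∨
        (w.d (k - 1) = false ∧ w.d k = true ∧
          (¬ InSC E (w.v (k - 1)) (w.v k) ∨ ¬ InSC E (w.v (k + 1)) (w.v k))))))

/-- `A` is d-separated from `B` by `C` in the graph with edge relation `E`. -/
def DSep {V : Type*} (E : V → V → Prop) (A B C : Set V) : Prop :=
  ∀ w : Walk E, w.v 0 ∈ A → w.v w.len ∈ B → DBlocked E C w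

/-- `A` is σ-separated from `B` by `C` in the graph with edge relation `E`. -/
def SigmaSep {V : Type*} (E : V → V → Prop) (A B C : Set V) : Prop :=
  ∀ w : Walk E, w.v 0 ∈ A → w.v w.len ∈ B → SigmaBlocked E C w

/-- The independence model under d-separation. -/
def IMd {V : Type*} (E : V → V → Prop) : Set (Set V × Set V × Set V) :=
  {t | DSep E t.1 t.2.1 t.2.2}

/-- The independence model under σ-separation. -/
def IMsigma {V : Type*} (E : V → V → Prop) : Set (Set V × Set V × Set V) :=
  {t | SigmaSep E t.1 t.2.1 t.2.2}

/-- Every finite directed graph (possibly cyclic) admits at least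
one acyclification. -/
theorem exists_acyclification {V : Type*} [Fintype V]
    (E : V → V → Prop) (hE : ∀ v, ¬ E v v) :
    ∃ E' : V → V → Prop, IsAcyclification E E' := by
  classical
  let f := Fintype.equivFin V
  refine ⟨fun i j => if InSC E i j then i ≠ j ∧ f i < f j else ∃ k, InSC E k j ∧ E i k,
    ?_, ?_, ?_⟩
  · -- acyclicity
    set P : V → V → Prop := fun a b =>
      (Anc E a b ∧ ¬ Anc E b a) ∨ (InSC E a b ∧ f a < f b) with hP
    have hPtrans : Transitive P := by
      rintro a b c (⟨hab, hnba⟩ | ⟨⟨hab, hba⟩, hfab⟩) (⟨hbc, hncb⟩ | ⟨⟨hbc, hcb⟩, hfbc⟩)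
      · exact Or.inl ⟨hab.trans hbc, fun h => hncb (h.trans hab)⟩
      · exact Or.inl ⟨hab.trans hbc, fun h => hnba (hbc.trans h)⟩
      · exact Or.inl ⟨hab.trans hbc, fun h => hncb (h.trans hab)⟩
      · exact Or.inr ⟨⟨hab.trans hbc, hcb.trans hba⟩, hfab.trans hfbc⟩
    have hPirr : ∀ a, ¬ P a a := by
      rintro a (⟨hab, hnba⟩ | ⟨_, hf⟩)
      · exact hnba hab
      · exact lt_irrefl _ hf
    intro i hi
    have hsub : ∀ a b, (if InSC E a b then a ≠ b ∧ f a < f b else ∃ k, InSC E k b ∧ E a k)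
        → P a b := by
      intro a b h
      by_cases hsc : InSC E a b
      · rw [if_pos hsc] at h
        exact Or.inr ⟨hsc, h.2⟩
      · rw [if_neg hsc] at h
        obtain ⟨k, ⟨hkb, hbk⟩, hak⟩ := h
        have hab : Anc E a b := (Relation.ReflTransGen.single hak).trans hkb
        exact Or.inl ⟨hab, fun hba => hsc ⟨hab, hba⟩⟩
    have : Relation.TransGen P i i := Relation.TransGen.mono hsub i i hi
    rw [@Relation.transGen_eq_self _ P ⟨fun a b c => @hPtrans a b c⟩] at this
    exact hPirr i this
  · intro i j h
    simp only [if_neg h]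
  · intro i j hij hsc
    have hsc' : InSC E j i := ⟨hsc.2, hsc.1⟩
    rcases lt_or_gt_of_ne (fun h : f i = f j => hij (f.injective h)) with h | h
    · exact Or.inl (by dsimp only; rw [if_pos hsc]; exact ⟨hij, h⟩)
    · exact Or.inr (by dsimp only; rw [if_pos hsc']; exact ⟨hij.symm, h⟩)
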